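/- Let ε > 0 and x ∈ ℝ² with |x| > 2ε (Euclidean norm), and let F : ℝ² → ℝ be the function F = (1/(2ε²))·(𝟙_{B_ε(0)} − 𝟙_{B_ε(x)}), where B_ε(y) denotes the closed Euclidean ball of radius ε centred at y. Then the function (z,z') ↦ F(z)F(z')·log|z−z'| is Lebesgue-integrable on ℝ² × ℝ², and (1/(2π²)) · ∬_{ℝ²×ℝ²} F(z)F(z') log|z−z'| dz dz' = (1/4)·log(ε/|x|) + 2b₀ − 2b_ε(x), where b₀ := (1/(8π²)) ∬_{B_1(0)×B_1(0)} log|z−z'| dz dz' and b_ε(x) := (1/(8π²)) ∬_{B_1(0)×B_1(0)} log( |x + ε(z−z')| / |x| ) dz dz'. -/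

import Mathlib

open Filter Topology MeasureTheory

namespace GFF

/-- The Euclidean plane `ℝ²`. -/
abbrev Plane : Type := EuclideanSpace ℝ (Fin 2)

/-- `b₀ = (1/(8π²)) ∬_{B_1(0)×B_1(0)} log|z-z'| dz dz'`. -/
noncomputable def b0 : ℝ :=
  (1 / (8 * Real.pi ^ 2)) *
    ∫ z in Metric.closedBall (0 : Plane) 1,
      ∫ z' in Metric.closedBall (0 : Plane) 1, Real.log ‖z - z'‖

/-- `b_ε(x) = (1/(8π²)) ∬_{B_1(0)×B_1(0)} log(|x + ε(z-z')|/|x|) dz dz'`. -/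
noncomputable def beps (ε : ℝ) (x : Plane) : ℝ :=
  (1 / (8 * Real.pi ^ 2)) *
    ∫ z in Metric.closedBall (0 : Plane) 1,
      ∫ z' in Metric.closedBall (0 : Plane) 1, Real.log (‖x + ε • (z - z')‖ / ‖x‖)

end GFF

namespace GFF
open Metric Set


instance : Measure.IsAddHaarMeasure (volume : Measure (Plane × Plane)) :=
  Measure.prod.instIsAddHaarMeasure _ _

lemma volume_ball_plane (r : ℝ) (hr : 0 ≤ r) :
    volume (closedBall (0 : Plane) r) = ENNReal.ofReal (Real.pi * r ^ 2) := by
  rw [EuclideanSpace.volume_closedBall]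
  simp only [Fintype.card_fin]
  rw [show ((2:ℕ):ℝ)/2 + 1 = 2 by norm_num, Real.Gamma_two,
    Real.sq_sqrt Real.pi_pos.le, div_one, ← ENNReal.ofReal_pow hr, ← ENNReal.ofReal_mul (by positivity)]
  ring_nf

lemma integrableOn_log_norm' (R : ℝ) (hR : 1 ≤ R) :
    IntegrableOn (fun z : Plane => Real.log ‖z‖) (closedBall 0 R) := by
  have hmeas : Measurable fun z : Plane => Real.log ‖z‖ :=
    Real.measurable_log.comp measurable_norm
  set μ := volume.restrict (closedBall (0 : Plane) R) with hμ
  have hlogR : 0 ≤ Real.log R := Real.log_nonneg hR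
  refine ⟨hmeas.aestronglyMeasurable, ?_⟩
  rw [hasFiniteIntegral_iff_norm]
  set f : Plane → ℝ := fun z => Real.log R - Real.log ‖z‖ with hf
  have hfnn : 0 ≤ᵐ[μ] f := by
    filter_upwards [ae_restrict_mem measurableSet_closedBall] with z hz
    rcases eq_or_ne z 0 with rfl | hz0
    · simp [f, hlogR]
    · have : Real.log ‖z‖ ≤ Real.log R :=
        Real.log_le_log (norm_pos_iff.2 hz0) (by simpa [mem_closedBall, dist_zero_right] using hz)
      simp [f, sub_nonneg, this]
  have key : ∫⁻ z, ENNReal.ofReal (f z) ∂μ = ∫⁻ t in Ioi 0, μ {a | t ≤ f a} :=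
    lintegral_eq_lintegral_meas_le μ hfnn (hmeas.aemeasurable.const_sub _)
  have hbound : ∀ t : ℝ, 0 < t → μ {a | t ≤ f a} ≤
      ENNReal.ofReal (Real.pi * R ^ 2 * Real.exp (-(2 * t))) := by
    intro t ht
    have hsub : {a : Plane | t ≤ f a} ⊆ closedBall 0 (R * Real.exp (-t)) := by
      intro z hz
      simp only [mem_setOf_eq, f] at hz
      have hz' : Real.log ‖z‖ ≤ Real.log R - t := by linarith
      rcases eq_or_ne z 0 with rfl | hz0
      · simp only [mem_closedBall, dist_zero_right, norm_zero]
        have : 0 < R := by linarith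
        positivity
      · have h1 : (0:ℝ) < ‖z‖ := norm_pos_iff.2 hz0
        have : ‖z‖ = Real.exp (Real.log ‖z‖) := (Real.exp_log h1).symm
        rw [mem_closedBall, dist_zero_right, this]
        calc Real.exp (Real.log ‖z‖) ≤ Real.exp (Real.log R - t) :=
              Real.exp_le_exp.2 hz'
          _ = R * Real.exp (-t) := by
              rw [Real.exp_sub, Real.exp_log (by linarith), Real.exp_neg]; ring
    calc μ {a : Plane | t ≤ f a} ≤ volume {a : Plane | t ≤ f a} :=
          Measure.restrict_le_self _
      _ ≤ volume (closedBall 0 (R * Real.exp (-t))) := measure_mono hsub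
      _ = ENNReal.ofReal (Real.pi * (R * Real.exp (-t)) ^ 2) :=
          volume_ball_plane _ (by positivity)
      _ = ENNReal.ofReal (Real.pi * R ^ 2 * Real.exp (-(2 * t))) := by
          congr 1
          rw [mul_pow, ← Real.exp_nat_mul]
          ring_nf
  have hfin : ∫⁻ z, ENNReal.ofReal (f z) ∂μ < ⊤ := by
    rw [key]
    calc ∫⁻ t in Ioi 0, μ {a | t ≤ f a}
        ≤ ∫⁻ t in Ioi 0, ENNReal.ofReal (Real.pi * R ^ 2 * Real.exp (-(2 * t))) := by
          refine lintegral_mono_ae ?_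
          filter_upwards [ae_restrict_mem measurableSet_Ioi] with t ht
          exact hbound t ht
      _ < ⊤ := by
          have hint : IntegrableOn (fun t : ℝ => Real.pi * R ^ 2 * Real.exp (-(2 * t)))
              (Ioi 0) := by
            have := (exp_neg_integrableOn_Ioi 0 (b := 2) (by norm_num)).const_mul
              (Real.pi * R ^ 2)
            simpa [neg_mul, IntegrableOn] using this
          exact hint.lintegral_lt_top
  have hconst : ∫⁻ (_ : Plane), ENNReal.ofReal (Real.log R) ∂μ < ⊤ := by
    rw [lintegral_const]
    exact ENNReal.mul_lt_top ENNReal.ofReal_lt_top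
      (by simp only [μ, Measure.restrict_apply_univ]; exact
        (measure_closedBall_lt_top (x := (0:Plane)) (r := R)))
  calc ∫⁻ z, ENNReal.ofReal ‖Real.log ‖z‖‖ ∂μ
      ≤ ∫⁻ z, (ENNReal.ofReal (f z) + ENNReal.ofReal (Real.log R)) ∂μ := by
        refine lintegral_mono_ae ?_
        filter_upwards [ae_restrict_mem measurableSet_closedBall] with z hz
        have hzR : ‖z‖ ≤ R := by simpa [mem_closedBall, dist_zero_right] using hz
        refine le_trans ?_ (ENNReal.ofReal_add_le)
        apply ENNReal.ofReal_le_ofReal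
        rw [Real.norm_eq_abs]
        have hlz : Real.log ‖z‖ ≤ Real.log R := by
          rcases eq_or_ne z 0 with rfl | hz0
          · simpa using hlogR
          · exact Real.log_le_log (norm_pos_iff.2 hz0) hzR
        refine abs_le.2 ⟨by simp only [f]; linarith, by simp only [f]; linarith⟩
    _ = (∫⁻ z, ENNReal.ofReal (f z) ∂μ) + ∫⁻ (_ : Plane), ENNReal.ofReal (Real.log R) ∂μ :=
        lintegral_add_right _ measurable_const
    _ < ⊤ := ENNReal.add_lt_top.2 ⟨hfin, hconst⟩

lemma integrableOn_log_norm (R : ℝ) :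
    IntegrableOn (fun z : Plane => Real.log ‖z‖) (closedBall 0 R) :=
  (integrableOn_log_norm' (max R 1) (le_max_right _ _)).mono_set
    (closedBall_subset_closedBall (le_max_left _ _))


lemma master (s : ℝ) (hs : s ≠ 0) (v a b : Plane) (r1 r2 : ℝ) :
    Integrable (fun p : Plane × Plane =>
      (closedBall a r1).indicator (fun _ => (1:ℝ)) p.1 *
      (closedBall b r2).indicator (fun _ => (1:ℝ)) p.2 *
      Real.log ‖s • (p.1 - p.2) + v‖) := by
  set ρ : ℝ := |s| * (‖a - b‖ + (r1 + r2)) + ‖v‖ with hρ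
  set Ψ : Plane → ℝ := (closedBall (0:Plane) ρ).indicator (fun y => |Real.log ‖y‖|) with hΨdef
  have hΨ : Integrable Ψ := by
    rw [hΨdef, integrable_indicator_iff measurableSet_closedBall]
    exact (integrableOn_log_norm ρ).abs
  have hΨ2 : Integrable (fun w : Plane => Ψ (s • w + v)) := by
    have h1 : Integrable (fun t : Plane => Ψ (t + v)) := hΨ.comp_add_right v
    exact (integrable_comp_smul_iff volume (fun t : Plane => Ψ (t + v)) hs).2 h1
  set ψ : Plane → ℝ :=
    (closedBall (a - b) (r1 + r2)).indicator (fun w => |Real.log ‖s • w + v‖|) with hψdef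
  have hΨnn : ∀ y, 0 ≤ Ψ y := fun y =>
    Set.indicator_nonneg (fun y _ => abs_nonneg _) y
  have hψnn : ∀ w, 0 ≤ ψ w := fun w =>
    Set.indicator_nonneg (fun w _ => abs_nonneg _) w
  have hψle : ∀ w, ψ w ≤ Ψ (s • w + v) := by
    intro w
    rw [hψdef]
    by_cases hw : w ∈ closedBall (a - b) (r1 + r2)
    · rw [Set.indicator_of_mem hw]
      have hmem : s • w + v ∈ closedBall (0:Plane) ρ := by
        rw [mem_closedBall, dist_zero_right]
        have hw' : ‖w‖ ≤ ‖a - b‖ + (r1 + r2) := by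
          have h' := mem_closedBall_iff_norm.1 hw
          have h'' := norm_sub_norm_le w (a - b)
          linarith
        calc ‖s • w + v‖ ≤ ‖s • w‖ + ‖v‖ := norm_add_le _ _
          _ = |s| * ‖w‖ + ‖v‖ := by rw [norm_smul, Real.norm_eq_abs]
          _ ≤ |s| * (‖a - b‖ + (r1 + r2)) + ‖v‖ := by
              have := abs_nonneg s
              nlinarith
      rw [hΨdef, Set.indicator_of_mem hmem]
    · rw [Set.indicator_of_notMem hw]
      exact hΨnn _
  have hψmeas : Measurable ψ := by
    refine Measurable.indicator ?_ measurableSet_closedBall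
    exact (Real.measurable_log.comp ((measurable_const_smul s).add_const v).norm).abs
  have hψ : Integrable ψ := by
    refine hΨ2.mono hψmeas.aestronglyMeasurable (ae_of_all _ fun w => ?_)
    rw [Real.norm_eq_abs, Real.norm_eq_abs, abs_of_nonneg (hψnn w),
      abs_of_nonneg (hΨnn _)]
    exact hψle w
  set φ : Plane → ℝ := (closedBall b r2).indicator (fun _ => (1:ℝ)) with hφdef
  have hφnn : ∀ y, 0 ≤ φ y := fun y => Set.indicator_nonneg (fun _ _ => zero_le_one) y
  have hφ : Integrable φ := by
    rw [hφdef, integrable_indicator_iff measurableSet_closedBall]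
    exact integrableOn_const measure_closedBall_lt_top.ne
  have HT : Integrable (fun p : Plane × Plane => ψ (p.1 - p.2) * φ p.2) := by
    rw [Measure.volume_eq_prod]
    have H : Integrable (fun q : Plane × Plane => ψ q.1 * φ q.2)
        ((volume : Measure Plane).prod volume) := hψ.mul_prod hφ
    have := ((measurePreserving_sub_prod (volume : Measure Plane)
      volume).integrable_comp H.aestronglyMeasurable).2 H
    exact this
  have hφmeas : Measurable φ := measurable_const.indicator measurableSet_closedBall
  have h1meas : Measurable fun z : Plane => (closedBall a r1).indicator (fun _ => (1:ℝ)) z :=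
    measurable_const.indicator measurableSet_closedBall
  refine HT.mono ?_ (ae_of_all _ fun p => ?_)
  · exact (((h1meas.comp measurable_fst).mul (hφmeas.comp measurable_snd)).mul
      (Real.measurable_log.comp
        (((measurable_fst.sub measurable_snd).const_smul s).add_const v).norm)).aestronglyMeasurable
  · rw [Real.norm_eq_abs, Real.norm_eq_abs,
      abs_of_nonneg (mul_nonneg (hψnn _) (hφnn _))]
    by_cases h1 : p.1 ∈ closedBall a r1
    · by_cases h2 : p.2 ∈ closedBall b r2
      · have hmem : p.1 - p.2 ∈ closedBall (a - b) (r1 + r2) := by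
          rw [mem_closedBall_iff_norm]
          have e1 := mem_closedBall_iff_norm.1 h1
          have e2 := mem_closedBall_iff_norm.1 h2
          have e3 : p.1 - p.2 - (a - b) = (p.1 - a) - (p.2 - b) := by abel
          rw [e3]
          exact (norm_sub_le _ _).trans (add_le_add e1 e2)
        have eφ : φ p.2 = 1 := by rw [hφdef, Set.indicator_of_mem h2]
        have eψ : ψ (p.1 - p.2) = |Real.log ‖s • (p.1 - p.2) + v‖| := by
          rw [hψdef, Set.indicator_of_mem hmem]
        rw [Set.indicator_of_mem h1, eφ, eψ]
        simp
      · have eφ : φ p.2 = 0 := by rw [hφdef, Set.indicator_of_notMem h2]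
        rw [eφ]
        simp
    · rw [Set.indicator_of_notMem h1]
      simpa using mul_nonneg (hψnn _) (hφnn _)


lemma ae_ne : ∀ᵐ p : Plane × Plane, p.1 ≠ p.2 := by
  have hmp := measurePreserving_sub_prod (volume : Measure Plane) volume
  rw [ae_iff]
  have hset : {p : Plane × Plane | ¬ p.1 ≠ p.2}
      = (fun p : Plane × Plane => (p.1 - p.2, p.2)) ⁻¹' ({0} ×ˢ univ) := by
    ext p; simp [sub_eq_zero, eq_comm]
  rw [Measure.volume_eq_prod, hset,
    hmp.measure_preimage (((measurableSet_singleton 0).prod MeasurableSet.univ).nullMeasurableSet),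
    Measure.prod_prod, measure_singleton, zero_mul]

lemma indicator_double (g : Plane → Plane → ℝ)
    (hg : Integrable (fun p : Plane × Plane =>
      (closedBall (0:Plane) 1).indicator (fun _ => (1:ℝ)) p.1 *
      (closedBall (0:Plane) 1).indicator (fun _ => (1:ℝ)) p.2 * g p.1 p.2)) :
    (∫ p : Plane × Plane,
      (closedBall (0:Plane) 1).indicator (fun _ => (1:ℝ)) p.1 *
      (closedBall (0:Plane) 1).indicator (fun _ => (1:ℝ)) p.2 * g p.1 p.2)
    = ∫ z in closedBall (0:Plane) 1, ∫ z' in closedBall (0:Plane) 1, g z z' := by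
  rw [Measure.volume_eq_prod] at hg ⊢
  rw [integral_prod _ hg]
  have inner : ∀ z : Plane,
      (∫ z' : Plane, (closedBall (0:Plane) 1).indicator (fun _ => (1:ℝ)) z *
        (closedBall (0:Plane) 1).indicator (fun _ => (1:ℝ)) z' * g z z')
      = (closedBall (0:Plane) 1).indicator
          (fun z => ∫ z' in closedBall (0:Plane) 1, g z z') z := by
    intro z
    by_cases h : z ∈ closedBall (0:Plane) 1
    · have heq : (fun z' : Plane => (closedBall (0:Plane) 1).indicator (fun _ => (1:ℝ)) z *
          (closedBall (0:Plane) 1).indicator (fun _ => (1:ℝ)) z' * g z z')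
          = fun z' => (closedBall (0:Plane) 1).indicator (fun z' => g z z') z' := by
        funext z'
        by_cases h' : z' ∈ closedBall (0:Plane) 1 <;>
          simp [Set.indicator_of_mem, Set.indicator_of_notMem, h, h']
      rw [heq, integral_indicator measurableSet_closedBall, Set.indicator_of_mem h]
    · have heq : (fun z' : Plane => (closedBall (0:Plane) 1).indicator (fun _ => (1:ℝ)) z *
          (closedBall (0:Plane) 1).indicator (fun _ => (1:ℝ)) z' * g z z') = fun _ => 0 := by
        funext z'; rw [Set.indicator_of_notMem h]; ring
      rw [heq, Set.indicator_of_notMem h]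
      simp
  simp only [inner]
  rw [integral_indicator measurableSet_closedBall]


end GFF

namespace GFF
open Metric Set

/-- The two-point test function `F = (1/(2ε²))(𝟙_{B_ε(0)} - 𝟙_{B_ε(x)})`. -/
noncomputable def Ftwo (ε : ℝ) (x : Plane) (z : Plane) : ℝ :=
  (1 / (2 * ε ^ 2)) *
    ((Metric.closedBall (0 : Plane) ε).indicator (fun _ => (1 : ℝ)) z -
      (Metric.closedBall x ε).indicator (fun _ => (1 : ℝ)) z)

set_option maxHeartbeats 2000000 in
/-- The GFF variance functional for the two-point observable:
`(1/(2π²)) ∬ F(z)F(z') log|z-z'| dz dz' = (1/4) log(ε/|x|) + 2b₀ - 2b_ε(x)`. -/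
theorem gff_two_point (ε : ℝ) (hε : 0 < ε) (x : Plane) (hx : 2 * ε < ‖x‖) :
    Integrable (fun p : Plane × Plane =>
      Ftwo ε x p.1 * Ftwo ε x p.2 * Real.log ‖p.1 - p.2‖) ∧
    (1 / (2 * Real.pi ^ 2)) *
        (∫ p : Plane × Plane, Ftwo ε x p.1 * Ftwo ε x p.2 * Real.log ‖p.1 - p.2‖) =
      (1 / 4) * Real.log (ε / ‖x‖) + 2 * b0 - 2 * beps ε x := by
  have hπ : Real.pi ≠ 0 := Real.pi_ne_zero
  have hxn : 0 < ‖x‖ := lt_trans (by positivity) hx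
  have hε' : (ε : ℝ) ≠ 0 := ne_of_gt hε
  -- single-variable indicator integrability and integral
  have hI1 : Integrable ((closedBall (0:Plane) 1).indicator (fun _ => (1:ℝ))) := by
    rw [integrable_indicator_iff measurableSet_closedBall]
    exact integrableOn_const measure_closedBall_lt_top.ne
  have hI1I1 : Integrable (fun p : Plane × Plane =>
      (closedBall (0:Plane) 1).indicator (fun _ => (1:ℝ)) p.1 *
      (closedBall (0:Plane) 1).indicator (fun _ => (1:ℝ)) p.2) := by
    rw [Measure.volume_eq_prod]; exact hI1.mul_prod hI1
  have intI1 : (∫ z : Plane, (closedBall (0:Plane) 1).indicator (fun _ => (1:ℝ)) z)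
      = Real.pi := by
    rw [integral_indicator_const (1:ℝ) measurableSet_closedBall, measureReal_def, volume_ball_plane 1 zero_le_one]
    simp [ENNReal.toReal_ofReal Real.pi_pos.le]
  have intI1I1 : (∫ p : Plane × Plane,
      (closedBall (0:Plane) 1).indicator (fun _ => (1:ℝ)) p.1 *
      (closedBall (0:Plane) 1).indicator (fun _ => (1:ℝ)) p.2) = Real.pi * Real.pi := by
    rw [Measure.volume_eq_prod, integral_prod_mul, intI1]
  -- the four base integrands
  have hti : ∀ a b : Plane, Integrable (fun p : Plane × Plane =>
      (closedBall a ε).indicator (fun _ => (1:ℝ)) p.1 *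
      (closedBall b ε).indicator (fun _ => (1:ℝ)) p.2 * Real.log ‖p.1 - p.2‖) := by
    intro a b
    have := master 1 one_ne_zero 0 a b ε ε
    simpa using this
  -- pointwise expansion of Ftwo
  have hfeq : (fun p : Plane × Plane => Ftwo ε x p.1 * Ftwo ε x p.2 * Real.log ‖p.1 - p.2‖)
      = fun p : Plane × Plane => (1/(2*ε^2))^2 *
        (((closedBall (0:Plane) ε).indicator (fun _ => (1:ℝ)) p.1 *
          (closedBall (0:Plane) ε).indicator (fun _ => (1:ℝ)) p.2 * Real.log ‖p.1 - p.2‖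
        - (closedBall (0:Plane) ε).indicator (fun _ => (1:ℝ)) p.1 *
          (closedBall x ε).indicator (fun _ => (1:ℝ)) p.2 * Real.log ‖p.1 - p.2‖)
        - ((closedBall x ε).indicator (fun _ => (1:ℝ)) p.1 *
          (closedBall (0:Plane) ε).indicator (fun _ => (1:ℝ)) p.2 * Real.log ‖p.1 - p.2‖
        - (closedBall x ε).indicator (fun _ => (1:ℝ)) p.1 *
          (closedBall x ε).indicator (fun _ => (1:ℝ)) p.2 * Real.log ‖p.1 - p.2‖)) := by
    funext p
    simp only [Ftwo]
    ring
  have hInt : Integrable (fun p : Plane × Plane =>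
      Ftwo ε x p.1 * Ftwo ε x p.2 * Real.log ‖p.1 - p.2‖) := by
    rw [hfeq]
    exact ((((hti 0 0).sub (hti 0 x)).sub ((hti x 0).sub (hti x x))).const_mul _)
  refine ⟨hInt, ?_⟩
  -- split the integral
  have hsplit : (∫ p : Plane × Plane, Ftwo ε x p.1 * Ftwo ε x p.2 * Real.log ‖p.1 - p.2‖)
      = (1/(2*ε^2))^2 *
        (((∫ p : Plane × Plane,
            (closedBall (0:Plane) ε).indicator (fun _ => (1:ℝ)) p.1 *
            (closedBall (0:Plane) ε).indicator (fun _ => (1:ℝ)) p.2 * Real.log ‖p.1 - p.2‖)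
          - ∫ p : Plane × Plane,
            (closedBall (0:Plane) ε).indicator (fun _ => (1:ℝ)) p.1 *
            (closedBall x ε).indicator (fun _ => (1:ℝ)) p.2 * Real.log ‖p.1 - p.2‖)
        - ((∫ p : Plane × Plane,
            (closedBall x ε).indicator (fun _ => (1:ℝ)) p.1 *
            (closedBall (0:Plane) ε).indicator (fun _ => (1:ℝ)) p.2 * Real.log ‖p.1 - p.2‖)
          - ∫ p : Plane × Plane,
            (closedBall x ε).indicator (fun _ => (1:ℝ)) p.1 *
            (closedBall x ε).indicator (fun _ => (1:ℝ)) p.2 * Real.log ‖p.1 - p.2‖)) := by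
    have i1 : Integrable (fun p : Plane × Plane => (closedBall (0:Plane) ε).indicator (fun _ => (1:ℝ)) p.1 *
        (closedBall (0:Plane) ε).indicator (fun _ => (1:ℝ)) p.2 * Real.log ‖p.1 - p.2‖ - ((closedBall (0:Plane) ε).indicator (fun _ => (1:ℝ)) p.1 *
        (closedBall x ε).indicator (fun _ => (1:ℝ)) p.2 * Real.log ‖p.1 - p.2‖)) := (hti 0 0).sub (hti 0 x)
    have i2 : Integrable (fun p : Plane × Plane => (closedBall x ε).indicator (fun _ => (1:ℝ)) p.1 *
        (closedBall (0:Plane) ε).indicator (fun _ => (1:ℝ)) p.2 * Real.log ‖p.1 - p.2‖ - ((closedBall x ε).indicator (fun _ => (1:ℝ)) p.1 *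
        (closedBall x ε).indicator (fun _ => (1:ℝ)) p.2 * Real.log ‖p.1 - p.2‖)) := (hti x 0).sub (hti x x)
    have s1 : (∫ p : Plane × Plane, ((closedBall (0:Plane) ε).indicator (fun _ => (1:ℝ)) p.1 *
        (closedBall (0:Plane) ε).indicator (fun _ => (1:ℝ)) p.2 * Real.log ‖p.1 - p.2‖ - ((closedBall (0:Plane) ε).indicator (fun _ => (1:ℝ)) p.1 *
        (closedBall x ε).indicator (fun _ => (1:ℝ)) p.2 * Real.log ‖p.1 - p.2‖)))
        = (∫ p : Plane × Plane, (closedBall (0:Plane) ε).indicator (fun _ => (1:ℝ)) p.1 *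
        (closedBall (0:Plane) ε).indicator (fun _ => (1:ℝ)) p.2 * Real.log ‖p.1 - p.2‖) - ∫ p : Plane × Plane, (closedBall (0:Plane) ε).indicator (fun _ => (1:ℝ)) p.1 *
        (closedBall x ε).indicator (fun _ => (1:ℝ)) p.2 * Real.log ‖p.1 - p.2‖ :=
      integral_sub (hti 0 0) (hti 0 x)
    have s2 : (∫ p : Plane × Plane, ((closedBall x ε).indicator (fun _ => (1:ℝ)) p.1 *
        (closedBall (0:Plane) ε).indicator (fun _ => (1:ℝ)) p.2 * Real.log ‖p.1 - p.2‖ - ((closedBall x ε).indicator (fun _ => (1:ℝ)) p.1 *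
        (closedBall x ε).indicator (fun _ => (1:ℝ)) p.2 * Real.log ‖p.1 - p.2‖)))
        = (∫ p : Plane × Plane, (closedBall x ε).indicator (fun _ => (1:ℝ)) p.1 *
        (closedBall (0:Plane) ε).indicator (fun _ => (1:ℝ)) p.2 * Real.log ‖p.1 - p.2‖) - ∫ p : Plane × Plane, (closedBall x ε).indicator (fun _ => (1:ℝ)) p.1 *
        (closedBall x ε).indicator (fun _ => (1:ℝ)) p.2 * Real.log ‖p.1 - p.2‖ :=
      integral_sub (hti x 0) (hti x x)
    have s3 : (∫ p : Plane × Plane, (((closedBall (0:Plane) ε).indicator (fun _ => (1:ℝ)) p.1 *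
        (closedBall (0:Plane) ε).indicator (fun _ => (1:ℝ)) p.2 * Real.log ‖p.1 - p.2‖ - ((closedBall (0:Plane) ε).indicator (fun _ => (1:ℝ)) p.1 *
        (closedBall x ε).indicator (fun _ => (1:ℝ)) p.2 * Real.log ‖p.1 - p.2‖)) - ((closedBall x ε).indicator (fun _ => (1:ℝ)) p.1 *
        (closedBall (0:Plane) ε).indicator (fun _ => (1:ℝ)) p.2 * Real.log ‖p.1 - p.2‖ - ((closedBall x ε).indicator (fun _ => (1:ℝ)) p.1 *
        (closedBall x ε).indicator (fun _ => (1:ℝ)) p.2 * Real.log ‖p.1 - p.2‖))))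
        = (∫ p : Plane × Plane, ((closedBall (0:Plane) ε).indicator (fun _ => (1:ℝ)) p.1 *
        (closedBall (0:Plane) ε).indicator (fun _ => (1:ℝ)) p.2 * Real.log ‖p.1 - p.2‖ - ((closedBall (0:Plane) ε).indicator (fun _ => (1:ℝ)) p.1 *
        (closedBall x ε).indicator (fun _ => (1:ℝ)) p.2 * Real.log ‖p.1 - p.2‖))) - ∫ p : Plane × Plane, ((closedBall x ε).indicator (fun _ => (1:ℝ)) p.1 *
        (closedBall (0:Plane) ε).indicator (fun _ => (1:ℝ)) p.2 * Real.log ‖p.1 - p.2‖ - ((closedBall x ε).indicator (fun _ => (1:ℝ)) p.1 *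
        (closedBall x ε).indicator (fun _ => (1:ℝ)) p.2 * Real.log ‖p.1 - p.2‖)) :=
      integral_sub i1 i2
    rw [hfeq, integral_const_mul, s3, s1, s2]
  -- swap symmetry
  have hswap : (∫ p : Plane × Plane,
        (closedBall (0:Plane) ε).indicator (fun _ => (1:ℝ)) p.1 *
        (closedBall x ε).indicator (fun _ => (1:ℝ)) p.2 * Real.log ‖p.1 - p.2‖)
      = ∫ p : Plane × Plane,
        (closedBall x ε).indicator (fun _ => (1:ℝ)) p.1 *
        (closedBall (0:Plane) ε).indicator (fun _ => (1:ℝ)) p.2 * Real.log ‖p.1 - p.2‖ := by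
    have h1 : (fun z : Plane × Plane =>
        (closedBall (0:Plane) ε).indicator (fun _ => (1:ℝ)) z.swap.1 *
        (closedBall x ε).indicator (fun _ => (1:ℝ)) z.swap.2 * Real.log ‖z.swap.1 - z.swap.2‖)
        = fun z : Plane × Plane =>
        (closedBall x ε).indicator (fun _ => (1:ℝ)) z.1 *
        (closedBall (0:Plane) ε).indicator (fun _ => (1:ℝ)) z.2 * Real.log ‖z.1 - z.2‖ := by
      funext z
      simp only [Prod.fst_swap, Prod.snd_swap, norm_sub_rev z.2 z.1]
      ring
    conv_lhs => rw [Measure.volume_eq_prod,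
      ← integral_prod_swap (fun p : Plane × Plane =>
        (closedBall (0:Plane) ε).indicator (fun _ => (1:ℝ)) p.1 *
        (closedBall x ε).indicator (fun _ => (1:ℝ)) p.2 * Real.log ‖p.1 - p.2‖)]
    rw [h1, ← Measure.volume_eq_prod]
  -- translation invariance
  have htrans : ∀ a b : Plane, (∫ p : Plane × Plane,
        (closedBall a ε).indicator (fun _ => (1:ℝ)) p.1 *
        (closedBall b ε).indicator (fun _ => (1:ℝ)) p.2 * Real.log ‖p.1 - p.2‖)
      = ∫ p : Plane × Plane,
        (closedBall (0:Plane) ε).indicator (fun _ => (1:ℝ)) p.1 *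
        (closedBall (0:Plane) ε).indicator (fun _ => (1:ℝ)) p.2 *
        Real.log ‖p.1 - p.2 + (a - b)‖ := by
    intro a b
    have key := integral_add_right_eq_self (μ := (volume : Measure (Plane × Plane)))
      (fun p : Plane × Plane =>
        (closedBall a ε).indicator (fun _ => (1:ℝ)) p.1 *
        (closedBall b ε).indicator (fun _ => (1:ℝ)) p.2 * Real.log ‖p.1 - p.2‖)
      ((a, b) : Plane × Plane)
    rw [← key]
    have e1 : ∀ (c z : Plane), (closedBall c ε).indicator (fun _ => (1:ℝ)) (z + c)
        = (closedBall (0:Plane) ε).indicator (fun _ => (1:ℝ)) z := by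
      intro c z
      have hm : z + c ∈ closedBall c ε ↔ z ∈ closedBall (0:Plane) ε := by
        rw [mem_closedBall_iff_norm, mem_closedBall_iff_norm, add_sub_cancel_right, sub_zero]
      by_cases h : z ∈ closedBall (0:Plane) ε
      · rw [Set.indicator_of_mem (hm.2 h), Set.indicator_of_mem h]
      · rw [Set.indicator_of_notMem (fun hc => h (hm.1 hc)), Set.indicator_of_notMem h]
    have hfun : (fun p : Plane × Plane =>
        (closedBall a ε).indicator (fun _ => (1:ℝ)) (p + (a, b)).1 *
        (closedBall b ε).indicator (fun _ => (1:ℝ)) (p + (a, b)).2 *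
        Real.log ‖(p + (a, b)).1 - (p + (a, b)).2‖)
        = fun p : Plane × Plane =>
        (closedBall (0:Plane) ε).indicator (fun _ => (1:ℝ)) p.1 *
        (closedBall (0:Plane) ε).indicator (fun _ => (1:ℝ)) p.2 *
        Real.log ‖p.1 - p.2 + (a - b)‖ := by
      funext p
      have e2 : p.1 + a - (p.2 + b) = p.1 - p.2 + (a - b) := by abel
      simp only [Prod.fst_add, Prod.snd_add, e1 a p.1, e1 b p.2, e2]
    rw [hfun]
  -- scaling
  have hfr : Module.finrank ℝ (Plane × Plane) = 4 := by
    simp [Module.finrank_prod]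
  have hscale : ∀ v : Plane, (∫ p : Plane × Plane,
        (closedBall (0:Plane) ε).indicator (fun _ => (1:ℝ)) p.1 *
        (closedBall (0:Plane) ε).indicator (fun _ => (1:ℝ)) p.2 *
        Real.log ‖p.1 - p.2 + v‖)
      = ε^4 * ∫ p : Plane × Plane,
        (closedBall (0:Plane) 1).indicator (fun _ => (1:ℝ)) p.1 *
        (closedBall (0:Plane) 1).indicator (fun _ => (1:ℝ)) p.2 *
        Real.log ‖ε • (p.1 - p.2) + v‖ := by
    intro v
    have key := Measure.integral_comp_smul_of_nonneg (volume : Measure (Plane × Plane))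
      (fun p : Plane × Plane =>
        (closedBall (0:Plane) ε).indicator (fun _ => (1:ℝ)) p.1 *
        (closedBall (0:Plane) ε).indicator (fun _ => (1:ℝ)) p.2 *
        Real.log ‖p.1 - p.2 + v‖) ε (hR := hε.le)
    rw [hfr] at key
    have e1 : ∀ z : Plane, (closedBall (0:Plane) ε).indicator (fun _ => (1:ℝ)) (ε • z)
        = (closedBall (0:Plane) 1).indicator (fun _ => (1:ℝ)) z := by
      intro z
      have hm : ε • z ∈ closedBall (0:Plane) ε ↔ z ∈ closedBall (0:Plane) 1 := by
        rw [mem_closedBall_iff_norm, mem_closedBall_iff_norm, sub_zero, sub_zero, norm_smul,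
          Real.norm_eq_abs, abs_of_pos hε]
        constructor
        · intro h; nlinarith [norm_nonneg z]
        · intro h; nlinarith [norm_nonneg z]
      by_cases h : z ∈ closedBall (0:Plane) 1
      · rw [Set.indicator_of_mem (hm.2 h), Set.indicator_of_mem h]
      · rw [Set.indicator_of_notMem (fun hc => h (hm.1 hc)), Set.indicator_of_notMem h]
    have hGs : (fun p : Plane × Plane =>
        (closedBall (0:Plane) ε).indicator (fun _ => (1:ℝ)) (ε • p).1 *
        (closedBall (0:Plane) ε).indicator (fun _ => (1:ℝ)) (ε • p).2 *
        Real.log ‖(ε • p).1 - (ε • p).2 + v‖)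
        = fun p : Plane × Plane =>
        (closedBall (0:Plane) 1).indicator (fun _ => (1:ℝ)) p.1 *
        (closedBall (0:Plane) 1).indicator (fun _ => (1:ℝ)) p.2 *
        Real.log ‖ε • (p.1 - p.2) + v‖ := by
      funext p
      have e2 : ε • p.1 - ε • p.2 = ε • (p.1 - p.2) := (smul_sub ε p.1 p.2).symm
      simp only [Prod.smul_fst, Prod.smul_snd, e1 p.1, e1 p.2, e2]
    rw [hGs] at key
    rw [key, smul_eq_mul]
    have hε4 : (ε:ℝ)^4 ≠ 0 := by positivity
    field_simp
  -- radius-one integrabilities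
  have hti1 : Integrable (fun p : Plane × Plane => (closedBall (0:Plane) 1).indicator (fun _ => (1:ℝ)) p.1 * (closedBall (0:Plane) 1).indicator (fun _ => (1:ℝ)) p.2 * Real.log ‖p.1 - p.2‖) := by
    have := master 1 one_ne_zero 0 0 0 1 1
    simpa using this
  have htiX : Integrable (fun p : Plane × Plane =>
      (closedBall (0:Plane) 1).indicator (fun _ => (1:ℝ)) p.1 * (closedBall (0:Plane) 1).indicator (fun _ => (1:ℝ)) p.2 * Real.log ‖ε • (p.1 - p.2) + x‖) := master ε hε' x 0 0 1 1
  -- pointwise identity for the x-term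
  have congrx : ∀ p : Plane × Plane,
      (closedBall (0:Plane) 1).indicator (fun _ => (1:ℝ)) p.1 * (closedBall (0:Plane) 1).indicator (fun _ => (1:ℝ)) p.2 * Real.log ‖ε • (p.1 - p.2) + x‖
      = Real.log ‖x‖ * ((closedBall (0:Plane) 1).indicator (fun _ => (1:ℝ)) p.1 * (closedBall (0:Plane) 1).indicator (fun _ => (1:ℝ)) p.2) + (closedBall (0:Plane) 1).indicator (fun _ => (1:ℝ)) p.1 * (closedBall (0:Plane) 1).indicator (fun _ => (1:ℝ)) p.2 * Real.log (‖x + ε • (p.1 - p.2)‖ / ‖x‖) := by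
    intro p
    by_cases h1 : p.1 ∈ closedBall (0:Plane) 1
    · by_cases h2 : p.2 ∈ closedBall (0:Plane) 1
      · have n1 : ‖p.1‖ ≤ 1 := by simpa [mem_closedBall_iff_norm] using h1
        have n2 : ‖p.2‖ ≤ 1 := by simpa [mem_closedBall_iff_norm] using h2
        have nd : ‖ε • (p.1 - p.2)‖ ≤ 2 * ε := by
          rw [norm_smul, Real.norm_eq_abs, abs_of_pos hε]
          have := norm_sub_le p.1 p.2
          nlinarith
        have hA : 0 < ‖x + ε • (p.1 - p.2)‖ := by
          have h3 : ‖x‖ ≤ ‖x + ε • (p.1 - p.2)‖ + ‖ε • (p.1 - p.2)‖ := by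
            have h4 := norm_sub_le (x + ε • (p.1 - p.2)) (ε • (p.1 - p.2))
            rw [add_sub_cancel_right] at h4
            exact h4
          linarith
        rw [Set.indicator_of_mem h1, Set.indicator_of_mem h2, add_comm (ε • (p.1 - p.2)) x,
          Real.log_div hA.ne' hxn.ne']
        ring
      · rw [Set.indicator_of_notMem h2]; ring
    · rw [Set.indicator_of_notMem h1]; ring
  have ibX : Integrable (fun p : Plane × Plane => (closedBall (0:Plane) 1).indicator (fun _ => (1:ℝ)) p.1 * (closedBall (0:Plane) 1).indicator (fun _ => (1:ℝ)) p.2 * Real.log (‖x + ε • (p.1 - p.2)‖ / ‖x‖)) := by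
    have heq : (fun p : Plane × Plane => (closedBall (0:Plane) 1).indicator (fun _ => (1:ℝ)) p.1 * (closedBall (0:Plane) 1).indicator (fun _ => (1:ℝ)) p.2 * Real.log (‖x + ε • (p.1 - p.2)‖ / ‖x‖))
        = fun p : Plane × Plane => ((closedBall (0:Plane) 1).indicator (fun _ => (1:ℝ)) p.1 * (closedBall (0:Plane) 1).indicator (fun _ => (1:ℝ)) p.2 * Real.log ‖ε • (p.1 - p.2) + x‖)
          - Real.log ‖x‖ * ((closedBall (0:Plane) 1).indicator (fun _ => (1:ℝ)) p.1 * (closedBall (0:Plane) 1).indicator (fun _ => (1:ℝ)) p.2) := by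
      funext p
      have := congrx p
      linarith
    rw [heq]
    exact htiX.sub (hI1I1.const_mul _)
  -- evaluation of the zero-shift integral
  have key0 : (∫ p : Plane × Plane, (closedBall (0:Plane) 1).indicator (fun _ => (1:ℝ)) p.1 * (closedBall (0:Plane) 1).indicator (fun _ => (1:ℝ)) p.2 * Real.log ‖ε • (p.1 - p.2) + (0:Plane)‖)
      = Real.log ε * (Real.pi * Real.pi)
        + ∫ p : Plane × Plane, (closedBall (0:Plane) 1).indicator (fun _ => (1:ℝ)) p.1 * (closedBall (0:Plane) 1).indicator (fun _ => (1:ℝ)) p.2 * Real.log ‖p.1 - p.2‖ := by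
    have hcg : (∫ p : Plane × Plane, (closedBall (0:Plane) 1).indicator (fun _ => (1:ℝ)) p.1 * (closedBall (0:Plane) 1).indicator (fun _ => (1:ℝ)) p.2 * Real.log ‖ε • (p.1 - p.2) + (0:Plane)‖)
        = ∫ p : Plane × Plane,
            (Real.log ε * ((closedBall (0:Plane) 1).indicator (fun _ => (1:ℝ)) p.1 * (closedBall (0:Plane) 1).indicator (fun _ => (1:ℝ)) p.2) + (closedBall (0:Plane) 1).indicator (fun _ => (1:ℝ)) p.1 * (closedBall (0:Plane) 1).indicator (fun _ => (1:ℝ)) p.2 * Real.log ‖p.1 - p.2‖) := by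
      refine integral_congr_ae ?_
      filter_upwards [ae_ne] with p hp
      by_cases h1 : p.1 ∈ closedBall (0:Plane) 1
      · by_cases h2 : p.2 ∈ closedBall (0:Plane) 1
        · have hd : p.1 - p.2 ≠ 0 := sub_ne_zero.mpr hp
          rw [add_zero, norm_smul, Real.norm_eq_abs, abs_of_pos hε,
            Real.log_mul hε' (norm_ne_zero_iff.mpr hd)]
          ring
        · rw [Set.indicator_of_notMem h2]; ring
      · rw [Set.indicator_of_notMem h1]; ring
    rw [hcg, integral_add (hI1I1.const_mul _) hti1, integral_const_mul, intI1I1]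
  -- evaluation of the x-shift integral
  have keyx : (∫ p : Plane × Plane, (closedBall (0:Plane) 1).indicator (fun _ => (1:ℝ)) p.1 * (closedBall (0:Plane) 1).indicator (fun _ => (1:ℝ)) p.2 * Real.log ‖ε • (p.1 - p.2) + x‖)
      = Real.log ‖x‖ * (Real.pi * Real.pi)
        + ∫ p : Plane × Plane, (closedBall (0:Plane) 1).indicator (fun _ => (1:ℝ)) p.1 * (closedBall (0:Plane) 1).indicator (fun _ => (1:ℝ)) p.2 * Real.log (‖x + ε • (p.1 - p.2)‖ / ‖x‖) := by
    have hcg : (∫ p : Plane × Plane, (closedBall (0:Plane) 1).indicator (fun _ => (1:ℝ)) p.1 * (closedBall (0:Plane) 1).indicator (fun _ => (1:ℝ)) p.2 * Real.log ‖ε • (p.1 - p.2) + x‖)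
        = ∫ p : Plane × Plane, (Real.log ‖x‖ * ((closedBall (0:Plane) 1).indicator (fun _ => (1:ℝ)) p.1 * (closedBall (0:Plane) 1).indicator (fun _ => (1:ℝ)) p.2) + (closedBall (0:Plane) 1).indicator (fun _ => (1:ℝ)) p.1 * (closedBall (0:Plane) 1).indicator (fun _ => (1:ℝ)) p.2 * Real.log (‖x + ε • (p.1 - p.2)‖ / ‖x‖)) := by
      refine integral_congr_ae (Filter.Eventually.of_forall fun p => ?_)
      exact congrx p
    rw [hcg, integral_add (hI1I1.const_mul _) ibX, integral_const_mul, intI1I1]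
  -- iterated forms
  have hAiter : (∫ p : Plane × Plane, (closedBall (0:Plane) 1).indicator (fun _ => (1:ℝ)) p.1 * (closedBall (0:Plane) 1).indicator (fun _ => (1:ℝ)) p.2 * Real.log ‖p.1 - p.2‖)
      = ∫ z in closedBall (0:Plane) 1, ∫ z' in closedBall (0:Plane) 1, Real.log ‖z - z'‖ :=
    indicator_double (fun z z' => Real.log ‖z - z'‖) hti1
  have hBiter : (∫ p : Plane × Plane, (closedBall (0:Plane) 1).indicator (fun _ => (1:ℝ)) p.1 * (closedBall (0:Plane) 1).indicator (fun _ => (1:ℝ)) p.2 * Real.log (‖x + ε • (p.1 - p.2)‖ / ‖x‖))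
      = ∫ z in closedBall (0:Plane) 1, ∫ z' in closedBall (0:Plane) 1,
          Real.log (‖x + ε • (z - z')‖ / ‖x‖) :=
    indicator_double (fun z z' => Real.log (‖x + ε • (z - z')‖ / ‖x‖)) ibX
  -- the four integrals
  have hxx : (∫ p : Plane × Plane, (closedBall x ε).indicator (fun _ => (1:ℝ)) p.1 * (closedBall x ε).indicator (fun _ => (1:ℝ)) p.2 * Real.log ‖p.1 - p.2‖) = ∫ p : Plane × Plane, (closedBall (0:Plane) ε).indicator (fun _ => (1:ℝ)) p.1 * (closedBall (0:Plane) ε).indicator (fun _ => (1:ℝ)) p.2 * Real.log ‖p.1 - p.2‖ := by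
    rw [htrans x x, htrans 0 0, sub_self, sub_self]
  have key00 : (∫ p : Plane × Plane, (closedBall (0:Plane) ε).indicator (fun _ => (1:ℝ)) p.1 * (closedBall (0:Plane) ε).indicator (fun _ => (1:ℝ)) p.2 * Real.log ‖p.1 - p.2‖)
      = ε^4 * (Real.log ε * (Real.pi * Real.pi)
        + ∫ p : Plane × Plane, (closedBall (0:Plane) 1).indicator (fun _ => (1:ℝ)) p.1 * (closedBall (0:Plane) 1).indicator (fun _ => (1:ℝ)) p.2 * Real.log ‖p.1 - p.2‖) := by
    rw [htrans 0 0, sub_self, hscale 0, key0]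
  have keyx0 : (∫ p : Plane × Plane, (closedBall x ε).indicator (fun _ => (1:ℝ)) p.1 * (closedBall (0:Plane) ε).indicator (fun _ => (1:ℝ)) p.2 * Real.log ‖p.1 - p.2‖)
      = ε^4 * (Real.log ‖x‖ * (Real.pi * Real.pi)
        + ∫ p : Plane × Plane, (closedBall (0:Plane) 1).indicator (fun _ => (1:ℝ)) p.1 * (closedBall (0:Plane) 1).indicator (fun _ => (1:ℝ)) p.2 * Real.log (‖x + ε • (p.1 - p.2)‖ / ‖x‖)) := by
    rw [htrans x 0, sub_zero, hscale x, keyx]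
  -- final arithmetic
  rw [hsplit, hswap, hxx, key00, keyx0, hAiter, hBiter]
  simp only [b0, beps]
  rw [Real.log_div hε' hxn.ne']
  have hε2 : (ε:ℝ)^2 ≠ 0 := pow_ne_zero _ hε'
  have hπ2 : (Real.pi:ℝ)^2 ≠ 0 := pow_ne_zero _ hπ
  field_simp
  ring


end GFF
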